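/- Let α_•(p) and α_∘(p) be as above for p ∈ (0,1/3). Then the alternating geometric sum (1/α_•)/(1/α_• + 1/α_∘) · Σ_{n≥1} (1 - α_•)^{n-1}·(-1)^n equals -p/(1 + 3p). -/

import Mathlib

/-- Sum over n ≥ 1 of the GF of square-lattice DA with compact sources of width n at -p:
the index shift n ↦ n+1 turns Σ_{n≥1} (1-α_•)^{n-1} (-1)^n into Σ'_{n:ℕ} (1-α_•)^n (-1)^{n+1}. -/
theorem stmt7 (p : ℝ) (hp : p ∈ Set.Ioo (0:ℝ) (1/3))
    (αb αo : ℝ)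
    (hαb : αb = (-1 + p + Real.sqrt (1 + 2*p - 3*p^2)) / (2*p))
    (hαo : αo = (-1 + p + Real.sqrt (1 + 2*p - 3*p^2)) / (1 + p + Real.sqrt (1 + 2*p - 3*p^2))) :
    (1/αb) / (1/αb + 1/αo) * (∑' n : ℕ, (1 - αb)^n * (-1 : ℝ)^(n+1)) = -p / (1 + 3*p) := by
  obtain ⟨hp0, hp3⟩ := hp
  set s := Real.sqrt (1 + 2*p - 3*p^2) with hs
  have hpos : 0 < 1 + 2*p - 3*p^2 := by nlinarith
  have hs2 : s^2 = 1 + 2*p - 3*p^2 := Real.sq_sqrt hpos.le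
  have hs0 : 0 < s := Real.sqrt_pos.mpr hpos
  have hs1 : 1 - p < s := by nlinarith
  have hsu : s < 1 + 3*p := by nlinarith
  have hN : 0 < -1 + p + s := by linarith
  have hD : 0 < 1 + p + s := by linarith
  have hαb0 : 0 < αb := by rw [hαb]; positivity
  have hαb2 : αb < 2 := by
    rw [hαb, div_lt_iff₀ (by linarith)]; linarith
  have hαo0 : 0 < αo := by rw [hαo]; positivity
  have habs : |αb - 1| < 1 := abs_lt.mpr ⟨by linarith, by linarith⟩
  have hsum : (∑' n : ℕ, (1 - αb)^n * (-1 : ℝ)^(n+1)) = -(1 - (αb - 1))⁻¹ := by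
    rw [← tsum_geometric_of_abs_lt_one habs, ← tsum_neg]
    congr 1; funext n
    rw [pow_succ, ← mul_assoc, ← mul_pow]
    ring_nf
  rw [hsum]
  have h2 : (0:ℝ) < 2 - αb := by linarith
  have h1 : 1 - (αb - 1) = 2 - αb := by ring
  rw [h1, hαb, hαo]
  have h3 : (0:ℝ) < 1 + 3*p - s := by linarith
  have h4 : (0:ℝ) < 1 + 3*p := by linarith
  rw [div_add_div _ _ (by positivity) (by positivity)]
  rw [show 2 - (-1 + p + s) / (2*p) = (1 + 3*p - s)/(2*p) by field_simp; ring]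
  field_simp
  rw [neg_inj, div_eq_iff (by linarith : (1 + p * 3 - s) ≠ 0)]
  linear_combination hs2
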